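/- Under the hypotheses of the half-line positivity lemma, with H strictly decreasing on (0,∞), if additionally f is continuous and f is not identically zero on [λ,∞), then (H ∗ f)(x) > 0 for all x > λ. -/

import Mathlib

open Real MeasureTheory Set

/-- With H strictly decreasing on (0,∞) and f continuous, odd about λ, nonnegative
and not identically zero on [λ,∞), the convolution H ∗ f is strictly positive on (λ,∞). -/
theorem conv_pos_halfline (H f : ℝ → ℝ) (lam : ℝ)
    (hHeven : ∀ x : ℝ, H x = H (-x))
    (hHint : MeasureTheory.Integrable H)
    (hHcont : ContinuousOn H {x : ℝ | x ≠ 0})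
    (hHmono : ∀ s t : ℝ, 0 < s → s < t → H t < H s)
    (hfcont : Continuous f)
    (hfbdd : ∃ C : ℝ, ∀ x : ℝ, |f x| ≤ C)
    (hfint : MeasureTheory.Integrable f)
    (hfpos : ∀ x : ℝ, lam ≤ x → 0 ≤ f x)
    (hfodd : ∀ x : ℝ, f x = -f (2 * lam - x))
    (hfne : ∃ x : ℝ, lam ≤ x ∧ f x ≠ 0) :
    ∀ x : ℝ, lam < x → 0 < ∫ y : ℝ, H (x - y) * f y := by
  obtain ⟨C, hC⟩ := hfbdd
  have hflam : f lam = 0 := by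
    have h := hfodd lam
    have : (2 : ℝ) * lam - lam = lam := by ring
    rw [this] at h
    linarith
  intro x hx
  -- key strict inequality
  have key : ∀ y : ℝ, lam < y → y ≠ x → H (x - 2 * lam + y) < H (x - y) := by
    intro y hy hyx
    have ha : 0 < x - lam := by linarith
    have hb : 0 < y - lam := by linarith
    have hsum : x - 2 * lam + y = (x - lam) + (y - lam) := by ring
    rcases lt_trichotomy (x - y) 0 with h | h | h
    · have : H (x - y) = H (y - x) := by rw [hHeven (x - y)]; ring_nf
      rw [this, hsum]
      exact hHmono (y - x) ((x - lam) + (y - lam)) (by linarith) (by linarith)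
    · exact absurd (by linarith : y = x) hyx
    · rw [hsum]
      exact hHmono (x - y) ((x - lam) + (y - lam)) h (by linarith)
  -- define k
  set k : ℝ → ℝ := fun y => (H (x - y) - H (x - 2 * lam + y)) * f y with hk
  have hknn_right : ∀ y : ℝ, lam ≤ y → y ≠ x → 0 ≤ k y := by
    intro y hy hyx
    rcases eq_or_lt_of_le hy with rfl | hy'
    · simp [hk, hflam]
    · exact mul_nonneg (le_of_lt (sub_pos.mpr (key y hy' hyx))) (hfpos y hy)
  have hksymm : ∀ y : ℝ, k (2 * lam - y) = k y := by
    intro y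
    have h1 : x - (2 * lam - y) = x - 2 * lam + y := by ring
    have h2 : x - 2 * lam + (2 * lam - y) = x - y := by ring
    have h3 : f (2 * lam - y) = -f y := by rw [hfodd y]; ring
    simp only [hk, h1, h2, h3]
    ring
  have hknn : ∀ y : ℝ, y ≠ x → y ≠ 2 * lam - x → 0 ≤ k y := by
    intro y hyx hyx'
    rcases le_or_gt lam y with hy | hy
    · exact hknn_right y hy hyx
    · rw [← hksymm y]
      exact hknn_right (2 * lam - y) (by linarith) (by intro h; apply hyx'; linarith)
  have hkae : 0 ≤ᵐ[volume] k := by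
    have hfin : ({x, 2 * lam - x} : Set ℝ).Finite := (Set.finite_singleton _).insert _
    have h0 : ∀ᵐ y : ℝ, y ∉ ({x, 2 * lam - x} : Set ℝ) :=
      measure_eq_zero_iff_ae_notMem.mp (hfin.measure_zero volume)
    filter_upwards [h0] with y hy
    simp only [Set.mem_insert_iff, Set.mem_singleton_iff, not_or] at hy
    exact hknn y hy.1 hy.2
  -- integrability
  have hmf : AEStronglyMeasurable f volume := hfcont.aestronglyMeasurable
  have hCnorm : ∃ C', ∀ y : ℝ, ‖f y‖ ≤ C' := ⟨C, fun y => by simpa using hC y⟩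
  have hint1 : Integrable (fun y : ℝ => H (x - y) * f y) := by
    have h1 : Integrable (fun y : ℝ => H (x - y)) := hHint.comp_sub_left x
    have := h1.bdd_mul hmf (Filter.Eventually.of_forall hCnorm.choose_spec)
    simpa [mul_comm] using this
  have hint2 : Integrable (fun y : ℝ => H (x - 2 * lam + y) * f y) := by
    have h1 : Integrable (fun y : ℝ => H (y + (x - 2 * lam))) := hHint.comp_add_right _
    have h1' : Integrable (fun y : ℝ => H (x - 2 * lam + y)) := by
      convert h1 using 2 with y; ring_nf
    have := h1'.bdd_mul hmf (Filter.Eventually.of_forall hCnorm.choose_spec)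
    simpa [mul_comm] using this
  have hkint : Integrable k := by
    have : Integrable (fun y => H (x - y) * f y - H (x - 2 * lam + y) * f y) := hint1.sub hint2
    refine this.congr (Filter.Eventually.of_forall fun y => ?_)
    simp only [hk]; ring
  -- substitution: I = -J
  set I : ℝ := ∫ y : ℝ, H (x - y) * f y with hI
  set J : ℝ := ∫ y : ℝ, H (x - 2 * lam + y) * f y with hJ
  have hIJ : I = -J := by
    have hsub := integral_sub_left_eq_self (fun y : ℝ => H (x - y) * f y) volume (2 * lam)
    have heq : ∀ y : ℝ, H (x - (2 * lam - y)) * f (2 * lam - y)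
        = -(H (x - 2 * lam + y) * f y) := by
      intro y
      have h1 : x - (2 * lam - y) = x - 2 * lam + y := by ring
      have h3 : f (2 * lam - y) = -f y := by rw [hfodd y]; ring
      rw [h1, h3]; ring
    calc I = ∫ y : ℝ, H (x - (2 * lam - y)) * f (2 * lam - y) := hsub.symm
      _ = ∫ y : ℝ, -(H (x - 2 * lam + y) * f y) := by
          congr 1; funext y; exact heq y
      _ = -J := by rw [integral_neg]
  have hkI : ∫ y : ℝ, k y = 2 * I := by
    have : ∫ y : ℝ, k y = ∫ y : ℝ, (H (x - y) * f y - H (x - 2 * lam + y) * f y) := by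
      congr 1; funext y; simp only [hk]; ring
    rw [this, integral_sub hint1 hint2, ← hI, ← hJ, hIJ]; ring
  -- locate positivity
  obtain ⟨y0, hy0lam, hy0ne⟩ := hfne
  have hfy0 : 0 < f y0 := lt_of_le_of_ne (hfpos y0 hy0lam) (Ne.symm hy0ne)
  have hy0lam' : lam < y0 := by
    rcases eq_or_lt_of_le hy0lam with rfl | h
    · exact absurd hflam hy0ne
    · exact h
  -- continuity neighborhood
  have hopen : IsOpen {y : ℝ | f y0 / 2 < f y} := isOpen_lt continuous_const hfcont
  obtain ⟨ε, hε, hball⟩ := Metric.isOpen_iff.mp hopen y0 (by simp; linarith)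
  set L : ℝ := max lam (y0 - ε) with hL
  have hLy0 : L < y0 := by
    apply max_lt hy0lam' (by linarith)
  -- choose interval [c,d] avoiding x
  obtain ⟨c, d, hcd, hLc, hdy0, hxcd⟩ :
      ∃ c d : ℝ, c < d ∧ L < c ∧ d < y0 ∧ x ∉ Icc c d := by
    rcases le_or_gt y0 x with hcase | hcase
    · refine ⟨(L + y0) / 2, (L + 3 * y0) / 4, by linarith, by linarith, by linarith, ?_⟩
      intro hmem
      have := hmem.2
      linarith
    · set M : ℝ := max L x with hM
      have hMy0 : M < y0 := max_lt hLy0 hcase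
      refine ⟨(M + y0) / 2, (M + 3 * y0) / 4, by linarith, ?_, by linarith, ?_⟩
      · have : L ≤ M := le_max_left _ _
        linarith
      · intro hmem
        have hxM : x ≤ M := le_max_right _ _
        have := hmem.1
        linarith
  have hmemprop : ∀ y ∈ Icc c d, lam < y ∧ y ≠ x ∧ f y0 / 2 < f y := by
    intro y hy
    have h1 : L < y := lt_of_lt_of_le hLc hy.1
    have h2 : y < y0 := lt_of_le_of_lt hy.2 hdy0
    have hylam : lam < y := lt_of_le_of_lt (le_max_left _ _) h1
    have hyne : y ≠ x := fun h => hxcd (h ▸ hy)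
    have hydist : y ∈ Metric.ball y0 ε := by
      simp only [Metric.mem_ball, Real.dist_eq, abs_sub_lt_iff]
      constructor
      · linarith
      · have : y0 - ε ≤ L := le_max_right _ _
        linarith
    exact ⟨hylam, hyne, hball hydist⟩
  -- continuous φ on Icc, min value η > 0
  set φ : ℝ → ℝ := fun y => H (x - y) - H (x - 2 * lam + y) with hφ
  have hφcont : ContinuousOn φ (Icc c d) := by
    have hc1 : ContinuousOn (fun y : ℝ => H (x - y)) (Icc c d) := by
      apply hHcont.comp (continuous_const.sub continuous_id).continuousOn
      intro y hy
      exact sub_ne_zero.mpr (Ne.symm (hmemprop y hy).2.1)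
    have hc2 : ContinuousOn (fun y : ℝ => H (x - 2 * lam + y)) (Icc c d) := by
      apply hHcont.comp (continuous_const.add continuous_id).continuousOn
      intro y hy
      have := (hmemprop y hy).1
      have : (0:ℝ) < x - 2 * lam + y := by linarith
      exact ne_of_gt this
    exact hc1.sub hc2
  obtain ⟨y1, hy1mem, hy1min⟩ := isCompact_Icc.exists_isMinOn
    (Set.nonempty_Icc.mpr (le_of_lt hcd)) hφcont
  have hη : 0 < φ y1 :=
    sub_pos.mpr (key y1 (hmemprop y1 hy1mem).1 (hmemprop y1 hy1mem).2.1)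
  set η : ℝ := φ y1 with hηdef
  set δ : ℝ := f y0 / 2 with hδdef
  have hδ : 0 < δ := by simp only [hδdef]; linarith
  have hlow : ∀ y ∈ Icc c d, η * δ ≤ k y := by
    intro y hy
    obtain ⟨hylam, hyne, hfy⟩ := hmemprop y hy
    have h1 : η ≤ φ y := hy1min hy
    have h2 : δ ≤ f y := le_of_lt hfy
    have : k y = φ y * f y := rfl
    rw [this]
    exact mul_le_mul h1 h2 (le_of_lt hδ) (le_trans (le_of_lt hη) h1)
  -- set integral bound
  have hset1 : ∫ y in Icc c d, (η * δ) ≤ ∫ y in Icc c d, k y := by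
    apply setIntegral_mono_on ((integrableOn_const_iff (C := η * δ) (by finiteness)).mpr (Or.inr (by
      rw [Real.volume_Icc]; exact ENNReal.ofReal_lt_top))) hkint.integrableOn
      measurableSet_Icc hlow
  have hconst : ∫ _ in Icc c d, (η * δ) = (d - c) * (η * δ) := by
    rw [setIntegral_const, Real.volume_real_Icc_of_le (by linarith)]
    simp [smul_eq_mul]
  have hpos_set : 0 < ∫ y in Icc c d, k y := by
    refine lt_of_lt_of_le ?_ hset1
    rw [hconst]
    exact mul_pos (by linarith) (mul_pos hη hδ)
  have hfull : ∫ y in Icc c d, k y ≤ ∫ y : ℝ, k y :=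
    setIntegral_le_integral hkint hkae
  have : 0 < 2 * I := by rw [← hkI]; exact lt_of_lt_of_le hpos_set hfull
  linarith
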